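/- Let Θ₁ and Θ₂ be two distinct commuting involutive antimorphisms of A* for a finite alphabet A such that the composition Θ₁Θ₂ (a morphism permuting the letters) has no fixed letter, i.e., Θ₁Θ₂ restricted to A is a derangement. If u is an infinite word over A whose language is closed under both Θ₁ and Θ₂, then for all n ≥ 1: ΔC(n) + 4 ≥ P_{Θ₁}(n) + P_{Θ₂}(n) + P_{Θ₁}(n+1) + P_{Θ₂}(n+1). -/

import Mathlib

open scoped Classical

/-- The finite word `w` occurs in the infinite word `u` at position `i`. -/
def OccursAt {A : Type*} (u : ℕ → A) (w : List A) (i : ℕ) : Prop :=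
  w = (List.range w.length).map fun k => u (i + k)

/-- The finite word `w` is a factor of the infinite word `u`. -/
def IsFactor {A : Type*} (u : ℕ → A) (w : List A) : Prop :=
  ∃ i, OccursAt u w i

/-- The (involutive) antimorphism of `A*` induced by the letter map `θ`:
it reverses a word and applies `θ` letterwise. -/
def antim {A : Type*} (θ : A → A) (w : List A) : List A :=
  (w.map θ).reverse

/-- `w` is a `θ`-palindrome, i.e. a fixed point of the antimorphism induced by `θ`. -/
def IsPalin {A : Type*} (θ : A → A) (w : List A) : Prop :=
  antim θ w = w

/-- Factor complexity of the infinite word `u`. -/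
noncomputable def fC {A : Type*} (u : ℕ → A) (n : ℕ) : ℕ :=
  Set.ncard {w : List A | w.length = n ∧ IsFactor u w}

/-- `θ`-palindromic complexity of the infinite word `u`. -/
noncomputable def fP {A : Type*} (u : ℕ → A) (θ : A → A) (n : ℕ) : ℕ :=
  Set.ncard {w : List A | w.length = n ∧ IsFactor u w ∧ IsPalin θ w}

/-- `γ_Θ(w)`: the number of pairs `{a, θ a}` with `a` occurring in `w` and `a ≠ θ a`. -/
noncomputable def gammaTheta {A : Type*} (θ : A → A) (w : List A) : ℕ :=
  Set.ncard {s : Set A | ∃ a ∈ w, θ a ≠ a ∧ s = {a, θ a}}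

/-- The set of `θ`-palindromic factors of the finite word `w`. -/
def palFactors {A : Type*} (θ : A → A) (w : List A) : Set (List A) :=
  {p | p <:+: w ∧ IsPalin θ p}

/-- The `Θ`-defect of a finite word `w`. -/
noncomputable def defect {A : Type*} (θ : A → A) (w : List A) : ℤ :=
  (w.length : ℤ) + 1 - gammaTheta θ w - Set.ncard (palFactors θ w)

/-- The number of occurrences of `w` in the finite word `v`. -/
noncomputable def numOcc {A : Type*} (w v : List A) : ℕ :=
  Set.ncard {i : ℕ | i + w.length ≤ v.length ∧ w <+: v.drop i}

namespace TwoAntiAux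

variable {A : Type*}

lemma antim_length (θ : A → A) (w : List A) : (antim θ w).length = w.length := by
  simp [antim]

lemma antim_comp (θ θ' : A → A) (w : List A) :
    antim θ (antim θ' w) = w.map (θ ∘ θ') := by
  simp [antim, List.map_reverse, List.map_map]

lemma antim_map (θ f : A → A) (w : List A) :
    antim θ (w.map f) = antim (θ ∘ f) w := by
  simp [antim, List.map_map]

lemma map_antim (θ f : A → A) (w : List A) :
    (antim θ w).map f = antim (f ∘ θ) w := by
  simp [antim, List.map_reverse, List.map_map]

lemma reverse_dropLast (l : List A) : l.reverse.dropLast = l.tail.reverse := by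
  have h := List.tail_reverse (l := l.reverse)
  rw [List.reverse_reverse] at h
  rw [h, List.reverse_reverse]

lemma dropLast_antim (θ : A → A) (w : List A) :
    (antim θ w).dropLast = antim θ w.tail := by
  rw [antim, reverse_dropLast, ← List.map_tail, antim]

lemma tail_antim (θ : A → A) (w : List A) :
    (antim θ w).tail = antim θ w.dropLast := by
  rw [antim, List.tail_reverse, ← List.map_dropLast, antim]

section Identities

variable {θ₁ θ₂ : A → A}

lemma comm_pt (hcomm : θ₁ ∘ θ₂ = θ₂ ∘ θ₁) (a : A) : θ₁ (θ₂ a) = θ₂ (θ₁ a) := congrFun hcomm a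

lemma T1T1 (h₁ : Function.Involutive θ₁) (w : List A) : antim θ₁ (antim θ₁ w) = w := by
  rw [antim_comp, h₁.comp_self, List.map_id]

lemma T2T2 (h₂ : Function.Involutive θ₂) (w : List A) : antim θ₂ (antim θ₂ w) = w := by
  rw [antim_comp, h₂.comp_self, List.map_id]

lemma T1T2 (w : List A) : antim θ₁ (antim θ₂ w) = w.map (θ₁ ∘ θ₂) := antim_comp θ₁ θ₂ w

lemma T2T1 (hcomm : θ₁ ∘ θ₂ = θ₂ ∘ θ₁) (w : List A) :
    antim θ₂ (antim θ₁ w) = w.map (θ₁ ∘ θ₂) := by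
  rw [antim_comp, hcomm]

lemma T1P (h₁ : Function.Involutive θ₁) (w : List A) :
    antim θ₁ (w.map (θ₁ ∘ θ₂)) = antim θ₂ w := by
  rw [antim_map]; congr 1; funext a; simp [Function.comp, h₁ _]

lemma PT1 (h₁ : Function.Involutive θ₁) (hcomm : θ₁ ∘ θ₂ = θ₂ ∘ θ₁) (w : List A) :
    (antim θ₁ w).map (θ₁ ∘ θ₂) = antim θ₂ w := by
  rw [map_antim]; congr 1; funext a
  simp only [Function.comp_apply]
  rw [comm_pt hcomm (θ₁ a), h₁ a]

lemma T2P (h₂ : Function.Involutive θ₂) (hcomm : θ₁ ∘ θ₂ = θ₂ ∘ θ₁) (w : List A) :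
    antim θ₂ (w.map (θ₁ ∘ θ₂)) = antim θ₁ w := by
  rw [antim_map]; congr 1; funext a
  simp only [Function.comp_apply]
  rw [comm_pt hcomm a, h₂ (θ₁ a)]

lemma PT2 (h₂ : Function.Involutive θ₂) (w : List A) :
    (antim θ₂ w).map (θ₁ ∘ θ₂) = antim θ₁ w := by
  rw [map_antim]; congr 1; funext a
  simp only [Function.comp_apply]
  rw [h₂ a]

lemma PP (h₁ : Function.Involutive θ₁) (h₂ : Function.Involutive θ₂)
    (hcomm : θ₁ ∘ θ₂ = θ₂ ∘ θ₁) (w : List A) :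
    (w.map (θ₁ ∘ θ₂)).map (θ₁ ∘ θ₂) = w := by
  rw [List.map_map]
  have : (θ₁ ∘ θ₂) ∘ θ₁ ∘ θ₂ = id := by
    funext a
    simp only [Function.comp_apply, id]
    rw [comm_pt hcomm a, h₂ (θ₁ a), h₁ a]
  rw [this, List.map_id]

end Identities



section Rel

variable {θ₁ θ₂ : A → A}

/-- orbit relation under the Klein four-group {id, Θ₁, Θ₂, Φ}. -/
def rel (θ₁ θ₂ : A → A) (v w : List A) : Prop :=
  w = v ∨ w = antim θ₁ v ∨ w = antim θ₂ v ∨ w = v.map (θ₁ ∘ θ₂)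

variable (h₁ : Function.Involutive θ₁) (h₂ : Function.Involutive θ₂)
  (hcomm : θ₁ ∘ θ₂ = θ₂ ∘ θ₁)

include h₁ h₂ hcomm in
lemma rel_equiv : Equivalence (rel θ₁ θ₂) := by
  constructor
  · intro x; exact Or.inl rfl
  · intro x y h
    rcases h with h | h | h | h <;> subst h
    · exact Or.inl rfl
    · exact Or.inr (Or.inl (T1T1 h₁ x).symm)
    · exact Or.inr (Or.inr (Or.inl (T2T2 h₂ x).symm))
    · exact Or.inr (Or.inr (Or.inr (PP h₁ h₂ hcomm x).symm))
  · intro x y z hxy hyz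
    rcases hxy with h | h | h | h <;> subst h <;>
      rcases hyz with h | h | h | h <;> subst h <;> unfold rel
    · exact Or.inl rfl
    · exact Or.inr (Or.inl rfl)
    · exact Or.inr (Or.inr (Or.inl rfl))
    · exact Or.inr (Or.inr (Or.inr rfl))
    · exact Or.inr (Or.inl rfl)
    · exact Or.inl (T1T1 h₁ x)
    · exact Or.inr (Or.inr (Or.inr (T2T1 hcomm x)))
    · exact Or.inr (Or.inr (Or.inl (PT1 h₁ hcomm x)))
    · exact Or.inr (Or.inr (Or.inl rfl))
    · exact Or.inr (Or.inr (Or.inr (T1T2 x)))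
    · exact Or.inl (T2T2 h₂ x)
    · exact Or.inr (Or.inl (PT2 h₂ x))
    · exact Or.inr (Or.inr (Or.inr rfl))
    · exact Or.inr (Or.inr (Or.inl (T1P h₁ x)))
    · exact Or.inr (Or.inl (T2P h₂ hcomm x))
    · exact Or.inl (PP h₁ h₂ hcomm x)

include h₁ h₂ hcomm in
lemma pal1_invariant {v w : List A} (h : rel θ₁ θ₂ v w) :
    (antim θ₁ v = v) ↔ (antim θ₁ w = w) := by
  rcases h with h | h | h | h <;> subst h
  · rfl
  · rw [T1T1 h₁]
    constructor
    · intro hp; rw [hp]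
    · intro hp; exact hp.symm
  · rw [T1T2]
    constructor
    · intro hp
      have := PT1 h₁ hcomm v
      rwa [hp] at this
    · intro hp
      have := congrArg (antim θ₂) hp
      rw [T2P h₂ hcomm, T2T2 h₂] at this
      exact this
  · rw [T1P h₁]
    constructor
    · intro hp
      have := T2T1 hcomm v
      rwa [hp] at this
    · intro hp
      have := PT2 (θ₁ := θ₁) h₂ v
      rw [hp, PP h₁ h₂ hcomm] at this
      exact this.symm

include hcomm in
lemma rel_swap {v w : List A} (h : rel θ₁ θ₂ v w) : rel θ₂ θ₁ v w := by
  unfold rel at h ⊢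
  rw [hcomm] at h
  tauto

include h₁ h₂ hcomm in
lemma pal2_invariant {v w : List A} (h : rel θ₁ θ₂ v w) :
    (antim θ₂ v = v) ↔ (antim θ₂ w = w) :=
  pal1_invariant h₂ h₁ hcomm.symm (rel_swap hcomm h)

end Rel

section Count

variable {θ₁ θ₂ : A → A} (h₁ : Function.Involutive θ₁) (h₂ : Function.Involutive θ₂)
  (hcomm : θ₁ ∘ θ₂ = θ₂ ∘ θ₁) (hder : ∀ a : A, θ₁ (θ₂ a) ≠ a)

include hder in
lemma Phi_ne {w : List A} (hw : w ≠ []) : w.map (θ₁ ∘ θ₂) ≠ w := by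
  cases w with
  | nil => exact absurd rfl hw
  | cons a t =>
    intro h
    simp only [List.map_cons, List.cons.injEq, Function.comp_apply] at h
    exact hder a h.1

include h₁ h₂ hcomm hder in
lemma sum_c (L : Finset (List A)) (hne : ∀ w ∈ L, w ≠ [])
    (hcl1 : ∀ w ∈ L, antim θ₁ w ∈ L) (hcl2 : ∀ w ∈ L, antim θ₂ w ∈ L) :
    (∑ w ∈ L, ((1 : ℕ) + (if antim θ₁ w = w then 1 else 0) + (if antim θ₂ w = w then 1 else 0)))
      = 4 * (L.image (Quot.mk (rel θ₁ θ₂))).card := by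
  classical
  set q : List A → Quot (rel θ₁ θ₂) := Quot.mk (rel θ₁ θ₂) with hq
  have hqeq : ∀ v w : List A, (q v = q w) ↔ rel θ₁ θ₂ v w := by
    intro v w
    rw [hq]
    rw [Quot.eq]
    exact Equivalence.eqvGen_iff (rel_equiv h₁ h₂ hcomm)
  set c : List A → ℕ := fun w =>
    (1 : ℕ) + (if antim θ₁ w = w then 1 else 0) + (if antim θ₂ w = w then 1 else 0) with hc
  rw [← Finset.sum_fiberwise_of_maps_to (fun w hw => Finset.mem_image_of_mem q hw) c]
  have hfour : ∀ t ∈ L.image q, (∑ w ∈ L.filter (fun w => q w = t), c w) = 4 := by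
    intro t ht
    obtain ⟨w₀, hw₀L, hw₀⟩ := Finset.mem_image.mp ht
    have horb : L.filter (fun v => q v = t)
        = {w₀, antim θ₁ w₀, antim θ₂ w₀, w₀.map (θ₁ ∘ θ₂)} := by
      ext v
      simp only [Finset.mem_filter, Finset.mem_insert, Finset.mem_singleton]
      constructor
      · rintro ⟨hvL, hqv⟩
        have hrel : rel θ₁ θ₂ w₀ v := (hqeq w₀ v).mp (hw₀.trans hqv.symm)
        exact hrel
      · rintro (h | h | h | h) <;> subst h
        · exact ⟨hw₀L, hw₀⟩
        · exact ⟨hcl1 w₀ hw₀L, ((hqeq _ w₀).mpr (Or.inr (Or.inl (T1T1 h₁ w₀).symm))).trans hw₀⟩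
        · exact ⟨hcl2 w₀ hw₀L, ((hqeq _ w₀).mpr (Or.inr (Or.inr (Or.inl (T2T2 h₂ w₀).symm)))).trans hw₀⟩
        · exact ⟨by
            have := hcl1 (antim θ₂ w₀) (hcl2 w₀ hw₀L)
            rwa [T1T2] at this,
            ((hqeq _ w₀).mpr (Or.inr (Or.inr (Or.inr (PP h₁ h₂ hcomm w₀).symm)))).trans hw₀⟩
    rw [horb]
    have hPne : w₀.map (θ₁ ∘ θ₂) ≠ w₀ := Phi_ne hder (hne w₀ hw₀L)
    by_cases hp1 : antim θ₁ w₀ = w₀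
    · -- θ₁-palindromic orbit
      have hp2 : ¬ antim θ₂ w₀ = w₀ := by
        intro hp2
        apply hPne
        rw [← T1T2, hp2, hp1]
      have hPhi : w₀.map (θ₁ ∘ θ₂) = antim θ₂ w₀ := by
        rw [← T2T1 hcomm, hp1]
      have hset : ({w₀, antim θ₁ w₀, antim θ₂ w₀, w₀.map (θ₁ ∘ θ₂)} : Finset (List A))
          = {w₀, antim θ₂ w₀} := by
        rw [hp1, hPhi]
        ext x
        simp only [Finset.mem_insert, Finset.mem_singleton]
        tauto
      have hne2 : w₀ ≠ antim θ₂ w₀ := fun h => hp2 h.symm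
      rw [hset, Finset.sum_pair hne2]
      have hb1 : antim θ₁ (antim θ₂ w₀) = antim θ₂ w₀ := by
        rw [T1T2]; exact hPhi
      have hb2 : ¬ antim θ₂ (antim θ₂ w₀) = antim θ₂ w₀ := by
        rw [T2T2 h₂]; exact hne2
      simp only [hc, if_pos hp1, if_neg hp2, if_pos hb1, if_neg hb2]
    · by_cases hp2 : antim θ₂ w₀ = w₀
      · -- θ₂-palindromic orbit
        have hPhi : w₀.map (θ₁ ∘ θ₂) = antim θ₁ w₀ := by
          rw [← T1T2, hp2]
        have hset : ({w₀, antim θ₁ w₀, antim θ₂ w₀, w₀.map (θ₁ ∘ θ₂)} : Finset (List A))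
            = {w₀, antim θ₁ w₀} := by
          rw [hp2, hPhi]
          ext x
          simp only [Finset.mem_insert, Finset.mem_singleton]
          tauto
        have hne2 : w₀ ≠ antim θ₁ w₀ := fun h => hp1 h.symm
        rw [hset, Finset.sum_pair hne2]
        have hb1 : ¬ antim θ₁ (antim θ₁ w₀) = antim θ₁ w₀ := by
          rw [T1T1 h₁]; exact hne2
        have hb2 : antim θ₂ (antim θ₁ w₀) = antim θ₁ w₀ := by
          rw [T2T1 hcomm]; exact hPhi
        simp only [hc, if_pos hp2, if_neg hp1, if_pos hb2, if_neg hb1]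
      · -- free orbit
        have d1 : w₀ ≠ antim θ₁ w₀ := fun h => hp1 h.symm
        have d2 : w₀ ≠ antim θ₂ w₀ := fun h => hp2 h.symm
        have d3 : w₀ ≠ w₀.map (θ₁ ∘ θ₂) := fun h => hPne h.symm
        have d4 : antim θ₁ w₀ ≠ antim θ₂ w₀ := by
          intro h
          apply d3
          rw [← T1T2, ← h, T1T1 h₁]
        have d5 : antim θ₁ w₀ ≠ w₀.map (θ₁ ∘ θ₂) := by
          intro h
          apply d2
          have := congrArg (antim θ₁) h
          rwa [T1T1 h₁, T1P h₁] at this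
        have d6 : antim θ₂ w₀ ≠ w₀.map (θ₁ ∘ θ₂) := by
          intro h
          apply d1
          have := congrArg (antim θ₂) h
          rwa [T2T2 h₂, T2P h₂ hcomm] at this
        have m1 : w₀ ∉ ({antim θ₁ w₀, antim θ₂ w₀, w₀.map (θ₁ ∘ θ₂)} : Finset (List A)) := by
          simp only [Finset.mem_insert, Finset.mem_singleton]
          push_neg
          exact ⟨d1, d2, d3⟩
        have m2 : antim θ₁ w₀ ∉ ({antim θ₂ w₀, w₀.map (θ₁ ∘ θ₂)} : Finset (List A)) := by
          simp only [Finset.mem_insert, Finset.mem_singleton]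
          push_neg
          exact ⟨d4, d5⟩
        have m3 : antim θ₂ w₀ ∉ ({w₀.map (θ₁ ∘ θ₂)} : Finset (List A)) := by
          simp only [Finset.mem_singleton]
          exact d6
        rw [Finset.sum_insert m1, Finset.sum_insert m2, Finset.sum_insert m3,
            Finset.sum_singleton]
        have e1 : ¬ antim θ₁ (antim θ₁ w₀) = antim θ₁ w₀ := by
          rw [T1T1 h₁]; exact d1
        have e2 : ¬ antim θ₂ (antim θ₁ w₀) = antim θ₁ w₀ := by
          rw [T2T1 hcomm]; exact fun h => d5 h.symm
        have e3 : ¬ antim θ₁ (antim θ₂ w₀) = antim θ₂ w₀ := by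
          rw [T1T2]; exact fun h => d6 h.symm
        have e4 : ¬ antim θ₂ (antim θ₂ w₀) = antim θ₂ w₀ := by
          rw [T2T2 h₂]; exact d2
        have e5 : ¬ antim θ₁ (w₀.map (θ₁ ∘ θ₂)) = w₀.map (θ₁ ∘ θ₂) := by
          rw [T1P h₁]; exact d6
        have e6 : ¬ antim θ₂ (w₀.map (θ₁ ∘ θ₂)) = w₀.map (θ₁ ∘ θ₂) := by
          rw [T2P h₂ hcomm]; exact d5
        simp only [hc, if_neg hp1, if_neg hp2, if_neg e1, if_neg e2, if_neg e3, if_neg e4,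
          if_neg e5, if_neg e6]
        norm_num
  calc (∑ t ∈ L.image q, ∑ w ∈ L.filter (fun w => q w = t), c w)
      = ∑ t ∈ L.image q, 4 := Finset.sum_congr rfl hfour
    _ = 4 * (L.image q).card := by rw [Finset.sum_const, smul_eq_mul, mul_comm]

end Count


section Graph

def chainLen {α : Type*} (R : α → α → Prop) (r : α) : ℕ → α → Prop
  | 0, v => v = r
  | k+1, v => ∃ w, chainLen R r k w ∧ R w v

lemma exists_chainLen {α : Type*} {R : α → α → Prop} {r v : α}
    (h : Relation.ReflTransGen R r v) : ∃ k, chainLen R r k v := by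
  induction h with
  | refl => exact ⟨0, rfl⟩
  | tail _ h2 ih => exact ⟨ih.choose + 1, _, ih.choose_spec, h2⟩

lemma conn_card_le {α β : Type*} (V : Finset α) (E : Finset β) (f g : β → α) (r : α)
    (hconn : ∀ v ∈ V, Relation.ReflTransGen
      (fun a b => ∃ e ∈ E, (f e = a ∧ g e = b) ∨ (f e = b ∧ g e = a)) r v) :
    V.card ≤ E.card + 1 := by
  classical
  set R : α → α → Prop :=
    fun a b => ∃ e ∈ E, (f e = a ∧ g e = b) ∨ (f e = b ∧ g e = a) with hR
  have hex : ∀ v ∈ V, ∃ k, chainLen R r k v := fun v hv => exists_chainLen (hconn v hv)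
  set d : α → ℕ := fun v => if h : ∃ k, chainLen R r k v then Nat.find h else 0 with hd
  have key : ∀ v ∈ V, v ≠ r → ∃ e, e ∈ E ∧
      ((f e = v ∧ d (g e) < d v) ∨ (g e = v ∧ d (f e) < d v)) := by
    intro v hv hvr
    have hhe := hex v hv
    have hspec : chainLen R r (d v) v := by
      simp only [hd, dif_pos hhe]
      exact Nat.find_spec hhe
    have hdpos : d v ≠ 0 := by
      intro h0
      rw [h0] at hspec
      exact hvr hspec
    obtain ⟨m, hm⟩ := Nat.exists_eq_succ_of_ne_zero hdpos
    rw [hm] at hspec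
    obtain ⟨w, hw, hRwv⟩ := hspec
    have hdw : d w ≤ m := by
      have hexw : ∃ k, chainLen R r k w := ⟨m, hw⟩
      simp only [hd, dif_pos hexw]
      exact Nat.find_le hw
    obtain ⟨e, he, hcase⟩ := hRwv
    rcases hcase with ⟨hf, hg⟩ | ⟨hf, hg⟩
    · exact ⟨e, he, Or.inr ⟨hg, by rw [hf]; omega⟩⟩
    · exact ⟨e, he, Or.inl ⟨hf, by rw [hg]; omega⟩⟩
  have hcard : V.card ≤ (V.erase r).card + 1 := by
    have hsub : V ⊆ insert r (V.erase r) := by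
      intro v hv
      by_cases h : v = r
      · exact Finset.mem_insert.mpr (Or.inl h)
      · exact Finset.mem_insert.mpr (Or.inr (Finset.mem_erase.mpr ⟨h, hv⟩))
    calc V.card ≤ (insert r (V.erase r)).card := Finset.card_le_card hsub
      _ ≤ (V.erase r).card + 1 := Finset.card_insert_le _ _
  rcases (V.erase r).eq_empty_or_nonempty with hVe | ⟨v₀, hv₀⟩
  · rw [hVe] at hcard
    simp only [Finset.card_empty] at hcard
    omega
  · have hneβ : Nonempty β := by
      obtain ⟨e, he, -⟩ := key v₀ (Finset.mem_of_mem_erase hv₀) (Finset.ne_of_mem_erase hv₀)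
      exact ⟨e⟩
    set P : α → Prop := fun v => ∃ e, e ∈ E ∧
      ((f e = v ∧ d (g e) < d v) ∨ (g e = v ∧ d (f e) < d v)) with hP
    set φ : α → β := fun v => if h : P v then h.choose else Classical.arbitrary β with hφ
    have hφspec : ∀ v ∈ V.erase r, φ v ∈ E ∧
        ((f (φ v) = v ∧ d (g (φ v)) < d v) ∨ (g (φ v) = v ∧ d (f (φ v)) < d v)) := by
      intro v hv
      have hx : P v := key v (Finset.mem_of_mem_erase hv) (Finset.ne_of_mem_erase hv)
      simp only [hφ, dif_pos hx]
      exact hx.choose_spec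
    have hinj : Set.InjOn φ (V.erase r) := by
      intro v₁ h1 v₂ h2 heq
      by_contra hne12
      obtain ⟨-, hp1⟩ := hφspec v₁ h1
      obtain ⟨-, hp2⟩ := hφspec v₂ h2
      rw [heq] at hp1
      rcases hp1 with ⟨ha, hb⟩ | ⟨ha, hb⟩ <;> rcases hp2 with ⟨hc, hd'⟩ | ⟨hc, hd'⟩
      · exact hne12 (ha.symm.trans hc)
      · rw [hc] at hb; rw [ha] at hd'; omega
      · rw [hc] at hb; rw [ha] at hd'; omega
      · exact hne12 (ha.symm.trans hc)
    have := Finset.card_le_card_of_injOn φ (fun v hv => (hφspec v hv).1) hinj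
    omega

end Graph


section Fac

variable (u : ℕ → A)

/-- the factor of `u` of length `m` starting at position `i`. -/
def fac (i m : ℕ) : List A := (List.range m).map (fun k => u (i + k))

lemma fac_length (i m : ℕ) : (fac u i m).length = m := by simp [fac]

lemma fac_isFactor (i m : ℕ) : IsFactor u (fac u i m) := by
  refine ⟨i, ?_⟩
  unfold OccursAt
  rw [fac_length]
  rfl

lemma fac_dropLast (i m : ℕ) : (fac u i (m+1)).dropLast = fac u i m := by
  simp [fac, List.range_succ]

lemma fac_tail (i m : ℕ) : (fac u i (m+1)).tail = fac u (i+1) m := by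
  rw [fac, List.range_succ_eq_map]
  simp only [List.map_cons, List.tail_cons, List.map_map]
  rw [fac]
  congr 1
  funext k
  simp only [Function.comp_apply]
  congr 1
  omega

end Fac

section EpPair

variable {θ₁ θ₂ : A → A} (h₁ : Function.Involutive θ₁) (h₂ : Function.Involutive θ₂)
  (hcomm : θ₁ ∘ θ₂ = θ₂ ∘ θ₁)

lemma ep_pair {e e' : List A} (h : rel θ₁ θ₂ e e') :
    (Quot.mk (rel θ₁ θ₂) e'.dropLast = Quot.mk (rel θ₁ θ₂) e.dropLast ∧
      Quot.mk (rel θ₁ θ₂) e'.tail = Quot.mk (rel θ₁ θ₂) e.tail) ∨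
    (Quot.mk (rel θ₁ θ₂) e'.dropLast = Quot.mk (rel θ₁ θ₂) e.tail ∧
      Quot.mk (rel θ₁ θ₂) e'.tail = Quot.mk (rel θ₁ θ₂) e.dropLast) := by
  rcases h with h | h | h | h <;> subst h
  · exact Or.inl ⟨rfl, rfl⟩
  · refine Or.inr ⟨?_, ?_⟩
    · rw [dropLast_antim]
      exact (Quot.sound (show rel θ₁ θ₂ e.tail (antim θ₁ e.tail) from Or.inr (Or.inl rfl))).symm
    · rw [tail_antim]
      exact (Quot.sound (show rel θ₁ θ₂ e.dropLast (antim θ₁ e.dropLast) from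
        Or.inr (Or.inl rfl))).symm
  · refine Or.inr ⟨?_, ?_⟩
    · rw [dropLast_antim]
      exact (Quot.sound (show rel θ₁ θ₂ e.tail (antim θ₂ e.tail) from
        Or.inr (Or.inr (Or.inl rfl)))).symm
    · rw [tail_antim]
      exact (Quot.sound (show rel θ₁ θ₂ e.dropLast (antim θ₂ e.dropLast) from
        Or.inr (Or.inr (Or.inl rfl)))).symm
  · refine Or.inl ⟨?_, ?_⟩
    · rw [← List.map_dropLast]
      exact (Quot.sound (show rel θ₁ θ₂ e.dropLast (e.dropLast.map (θ₁ ∘ θ₂)) from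
        Or.inr (Or.inr (Or.inr rfl)))).symm
    · rw [← List.map_tail]
      exact (Quot.sound (show rel θ₁ θ₂ e.tail (e.tail.map (θ₁ ∘ θ₂)) from
        Or.inr (Or.inr (Or.inr rfl)))).symm

end EpPair

end TwoAntiAux

open TwoAntiAux in
/-- If `Θ₁`, `Θ₂` are distinct commuting involutive antimorphisms whose
composition is a derangement of the letters, and the language of `u` is closed under
both, then `ΔC(n) + 4 ≥ P_{Θ₁}(n) + P_{Θ₂}(n) + P_{Θ₁}(n+1) + P_{Θ₂}(n+1)` for all `n ≥ 1`. -/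
theorem two_antimorphisms_derangement_inequality
    {A : Type*} [Fintype A] (θ₁ θ₂ : A → A)
    (h₁ : Function.Involutive θ₁) (h₂ : Function.Involutive θ₂)
    (hne : θ₁ ≠ θ₂) (hcomm : θ₁ ∘ θ₂ = θ₂ ∘ θ₁)
    (hder : ∀ a : A, θ₁ (θ₂ a) ≠ a)
    (u : ℕ → A) (hall : ∀ a : A, ∃ i, u i = a)
    (hc₁ : ∀ w : List A, IsFactor u w → IsFactor u (antim θ₁ w))
    (hc₂ : ∀ w : List A, IsFactor u w → IsFactor u (antim θ₂ w))
    (n : ℕ) (hn : 1 ≤ n) :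
    (fC u (n+1) : ℤ) - fC u n + 4 ≥
      (fP u θ₁ n : ℤ) + fP u θ₂ n + fP u θ₁ (n+1) + fP u θ₂ (n+1) := by
  classical
  have hequiv : Equivalence (rel θ₁ θ₂) := rel_equiv h₁ h₂ hcomm
  set qm : List A → Quot (rel θ₁ θ₂) := Quot.mk (rel θ₁ θ₂) with hqm
  have hqeq : ∀ v w : List A, (qm v = qm w) ↔ rel θ₁ θ₂ v w := by
    intro v w
    rw [hqm, Quot.eq]
    exact Equivalence.eqvGen_iff hequiv
  -- the languages as finsets
  have hfin : ∀ m : ℕ, ({w : List A | w.length = m ∧ IsFactor u w}).Finite := fun m =>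
    (List.finite_length_eq A m).subset (fun w hw => hw.1)
  set Ln : Finset (List A) := (hfin n).toFinset with hLn
  set Ln1 : Finset (List A) := (hfin (n+1)).toFinset with hLn1
  have hmemLn : ∀ w : List A, w ∈ Ln ↔ (w.length = n ∧ IsFactor u w) := by
    intro w; rw [hLn, Set.Finite.mem_toFinset]; rfl
  have hmemLn1 : ∀ w : List A, w ∈ Ln1 ↔ (w.length = n + 1 ∧ IsFactor u w) := by
    intro w; rw [hLn1, Set.Finite.mem_toFinset]; rfl
  -- complexity identifications
  have hCn : fC u n = Ln.card := by
    rw [fC, Set.ncard_eq_toFinset_card _ (hfin n), hLn]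
  have hCn1 : fC u (n+1) = Ln1.card := by
    rw [fC, Set.ncard_eq_toFinset_card _ (hfin (n+1)), hLn1]
  have hPkey : ∀ (θ : A → A) (m : ℕ), fP u θ m
      = ((hfin m).toFinset.filter (fun w => antim θ w = w)).card := by
    intro θ m
    have hf2 : ({w : List A | w.length = m ∧ IsFactor u w ∧ IsPalin θ w}).Finite :=
      (hfin m).subset (fun w hw => ⟨hw.1, hw.2.1⟩)
    rw [fP, Set.ncard_eq_toFinset_card _ hf2]
    congr 1
    ext w
    simp only [Set.Finite.mem_toFinset, Finset.mem_filter, Set.mem_setOf_eq, IsPalin]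
    tauto
  -- closure of the languages
  have hclo1 : ∀ m : ℕ, ∀ w ∈ (hfin m).toFinset, antim θ₁ w ∈ (hfin m).toFinset := by
    intro m w hw
    rw [Set.Finite.mem_toFinset] at hw ⊢
    exact ⟨by rw [antim_length]; exact hw.1, hc₁ w hw.2⟩
  have hclo2 : ∀ m : ℕ, ∀ w ∈ (hfin m).toFinset, antim θ₂ w ∈ (hfin m).toFinset := by
    intro m w hw
    rw [Set.Finite.mem_toFinset] at hw ⊢
    exact ⟨by rw [antim_length]; exact hw.1, hc₂ w hw.2⟩
  have hneLn : ∀ w ∈ Ln, w ≠ [] := by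
    intro w hw
    rw [hmemLn] at hw
    intro hnil
    rw [hnil] at hw
    simp only [List.length_nil] at hw
    omega
  have hneLn1 : ∀ w ∈ Ln1, w ≠ [] := by
    intro w hw
    rw [hmemLn1] at hw
    intro hnil
    rw [hnil] at hw
    simp only [List.length_nil] at hw
    omega
  -- set up the counting
  set p1n := (Ln.filter (fun w => antim θ₁ w = w)).card with hp1n
  set p2n := (Ln.filter (fun w => antim θ₂ w = w)).card with hp2n
  set p1n1 := (Ln1.filter (fun w => antim θ₁ w = w)).card with hp1n1
  set p2n1 := (Ln1.filter (fun w => antim θ₂ w = w)).card with hp2n1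
  set Nn := (Ln.image qm).card with hNn
  -- Burnside-type count on L_n
  have A1 : Ln.card + p1n + p2n = 4 * Nn := by
    have hsum := sum_c h₁ h₂ hcomm hder Ln hneLn (hclo1 n) (hclo2 n)
    rw [← hqm] at hsum
    rw [Finset.sum_add_distrib, Finset.sum_add_distrib, ← Finset.card_eq_sum_ones,
      ← Finset.card_filter, ← Finset.card_filter] at hsum
    exact hsum
  -- free orbits among L_{n+1}
  set L' := Ln1.filter (fun w => ¬ antim θ₁ w = w ∧ ¬ antim θ₂ w = w) with hL'
  set F := (L'.image qm).card with hF
  have hcloL'1 : ∀ w ∈ L', antim θ₁ w ∈ L' := by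
    intro w hw
    rw [hL', Finset.mem_filter] at hw ⊢
    obtain ⟨hw1, hnp1, hnp2⟩ := hw
    refine ⟨hclo1 (n+1) w hw1, ?_, ?_⟩
    · exact fun h => hnp1 ((pal1_invariant h₁ h₂ hcomm (Or.inr (Or.inl rfl))).mpr h)
    · exact fun h => hnp2 ((pal2_invariant h₁ h₂ hcomm (Or.inr (Or.inl rfl))).mpr h)
  have hcloL'2 : ∀ w ∈ L', antim θ₂ w ∈ L' := by
    intro w hw
    rw [hL', Finset.mem_filter] at hw ⊢
    obtain ⟨hw1, hnp1, hnp2⟩ := hw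
    refine ⟨hclo2 (n+1) w hw1, ?_, ?_⟩
    · exact fun h => hnp1 ((pal1_invariant h₁ h₂ hcomm (Or.inr (Or.inr (Or.inl rfl)))).mpr h)
    · exact fun h => hnp2 ((pal2_invariant h₁ h₂ hcomm (Or.inr (Or.inr (Or.inl rfl)))).mpr h)
  have hneL' : ∀ w ∈ L', w ≠ [] := fun w hw => hneLn1 w (Finset.mem_of_mem_filter w hw)
  have A2 : L'.card = 4 * F := by
    have hsum := sum_c h₁ h₂ hcomm hder L' hneL' hcloL'1 hcloL'2
    rw [← hqm] at hsum
    rw [← hsum, Finset.card_eq_sum_ones]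
    refine Finset.sum_congr rfl ?_
    intro w hw
    rw [hL', Finset.mem_filter] at hw
    rw [if_neg hw.2.1, if_neg hw.2.2]
  have A3 : p1n1 + p2n1 + L'.card = Ln1.card := by
    have hnotboth : ∀ w ∈ Ln1, ¬ (antim θ₁ w = w ∧ antim θ₂ w = w) := by
      rintro w hw ⟨ha, hb⟩
      apply Phi_ne hder (hneLn1 w hw)
      rw [← T1T2, hb, ha]
    have hd12 : Disjoint (Ln1.filter (fun w => antim θ₁ w = w))
        (Ln1.filter (fun w => antim θ₂ w = w)) := by
      rw [Finset.disjoint_left]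
      intro w hw1 hw2
      rw [Finset.mem_filter] at hw1 hw2
      exact hnotboth w hw1.1 ⟨hw1.2, hw2.2⟩
    have hdisj : Disjoint (Ln1.filter (fun w => antim θ₁ w = w)
        ∪ Ln1.filter (fun w => antim θ₂ w = w)) L' := by
      rw [Finset.disjoint_left]
      intro w hw hw'
      rw [Finset.mem_union, Finset.mem_filter, Finset.mem_filter] at hw
      rw [hL', Finset.mem_filter] at hw'
      rcases hw with hw | hw
      · exact hw'.2.1 hw.2
      · exact hw'.2.2 hw.2
    have hunion : (Ln1.filter (fun w => antim θ₁ w = w)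
        ∪ Ln1.filter (fun w => antim θ₂ w = w)) ∪ L' = Ln1 := by
      ext w
      rw [Finset.mem_union, Finset.mem_union, Finset.mem_filter, Finset.mem_filter,
        hL', Finset.mem_filter]
      constructor
      · rintro ((h | h) | h) <;> exact h.1
      · intro hw
        by_cases hp1 : antim θ₁ w = w
        · exact Or.inl (Or.inl ⟨hw, hp1⟩)
        · by_cases hp2 : antim θ₂ w = w
          · exact Or.inl (Or.inr ⟨hw, hp2⟩)
          · exact Or.inr ⟨hw, hp1, hp2⟩
    calc p1n1 + p2n1 + L'.card
        = ((Ln1.filter (fun w => antim θ₁ w = w))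
            ∪ (Ln1.filter (fun w => antim θ₂ w = w))).card + L'.card := by
          rw [Finset.card_union_of_disjoint hd12, hp1n1, hp2n1]
      _ = ((Ln1.filter (fun w => antim θ₁ w = w)
            ∪ Ln1.filter (fun w => antim θ₂ w = w)) ∪ L').card :=
          (Finset.card_union_of_disjoint hdisj).symm
      _ = Ln1.card := by rw [hunion]
  -- connectivity of the quotient Rauzy graph
  set f : Quot (rel θ₁ θ₂) → Quot (rel θ₁ θ₂) := fun t => qm ((Quot.out t).dropLast) with hf
  set g : Quot (rel θ₁ θ₂) → Quot (rel θ₁ θ₂) := fun t => qm ((Quot.out t).tail) with hg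
  set E := L'.image qm with hE
  have reach : ∀ i : ℕ, Relation.ReflTransGen
      (fun a b => ∃ e ∈ E, (f e = a ∧ g e = b) ∨ (f e = b ∧ g e = a))
      (qm (fac u 0 n)) (qm (fac u i n)) := by
    intro i
    induction i with
    | zero => exact Relation.ReflTransGen.refl
    | succ i ih =>
      have heLn1 : fac u i (n+1) ∈ Ln1 := by
        rw [hmemLn1]
        exact ⟨fac_length u i (n+1), fac_isFactor u i (n+1)⟩
      have hdl : (fac u i (n+1)).dropLast = fac u i n := fac_dropLast u i n
      have htl : (fac u i (n+1)).tail = fac u (i+1) n := fac_tail u i n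
      by_cases hpe1 : antim θ₁ (fac u i (n+1)) = fac u i (n+1)
      · have hstep : qm (fac u i n) = qm (fac u (i+1) n) := by
          rw [← hdl, ← htl]
          conv_lhs => rw [← hpe1]
          rw [dropLast_antim]
          exact (Quot.sound (show rel θ₁ θ₂ (fac u i (n+1)).tail
            (antim θ₁ (fac u i (n+1)).tail) from Or.inr (Or.inl rfl))).symm
        rw [← hstep]
        exact ih
      · by_cases hpe2 : antim θ₂ (fac u i (n+1)) = fac u i (n+1)
        · have hstep : qm (fac u i n) = qm (fac u (i+1) n) := by
            rw [← hdl, ← htl]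
            conv_lhs => rw [← hpe2]
            rw [dropLast_antim]
            exact (Quot.sound (show rel θ₁ θ₂ (fac u i (n+1)).tail
              (antim θ₂ (fac u i (n+1)).tail) from Or.inr (Or.inr (Or.inl rfl)))).symm
          rw [← hstep]
          exact ih
        · have heL' : fac u i (n+1) ∈ L' := by
            rw [hL', Finset.mem_filter]
            exact ⟨heLn1, hpe1, hpe2⟩
          have htE : qm (fac u i (n+1)) ∈ E := by
            rw [hE]
            exact Finset.mem_image_of_mem qm heL'
          have hrel : rel θ₁ θ₂ (fac u i (n+1)) (Quot.out (qm (fac u i (n+1)))) :=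
            hequiv.symm ((hqeq _ _).mp (Quot.out_eq (qm (fac u i (n+1)))))
          have hcase := ep_pair (θ₁ := θ₁) (θ₂ := θ₂) hrel
          rw [← hqm] at hcase
          refine ih.tail ⟨qm (fac u i (n+1)), htE, ?_⟩
          rw [← hdl, ← htl]
          rcases hcase with ⟨hA, hB⟩ | ⟨hA, hB⟩
          · exact Or.inl ⟨by rw [hf]; exact hA, by rw [hg]; exact hB⟩
          · exact Or.inr ⟨by rw [hf]; exact hA, by rw [hg]; exact hB⟩
  have hconn : ∀ v ∈ Ln.image qm, Relation.ReflTransGen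
      (fun a b => ∃ e ∈ E, (f e = a ∧ g e = b) ∨ (f e = b ∧ g e = a))
      (qm (fac u 0 n)) v := by
    intro v hv
    obtain ⟨w, hwLn, rfl⟩ := Finset.mem_image.mp hv
    obtain ⟨hwlen, i, hocc⟩ := (hmemLn w).mp hwLn
    have hw : w = fac u i n := by
      rw [fac, ← hwlen]
      exact hocc
    rw [hw]
    exact reach i
  have A4 : Nn ≤ F + 1 := by
    rw [hNn, hF]
    exact conn_card_le (Ln.image qm) E f g (qm (fac u 0 n)) hconn
  -- final arithmetic
  have hP1n := hPkey θ₁ n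
  have hP2n := hPkey θ₂ n
  have hP1n1 := hPkey θ₁ (n+1)
  have hP2n1 := hPkey θ₂ (n+1)
  rw [← hLn, ← hp1n] at hP1n
  rw [← hLn, ← hp2n] at hP2n
  rw [← hLn1, ← hp1n1] at hP1n1
  rw [← hLn1, ← hp2n1] at hP2n1
  rw [ge_iff_le, hCn, hCn1, hP1n, hP2n, hP1n1, hP2n1]
  push_cast
  omega
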